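/- (Lemma 2) For all real numbers s, t, u, one has ξ(s,t)·ξ(s,u) − [ξ(s, (t+u)/2) − ξ((s+u)/2, (s+t)/2)]² ≥ 0, where ξ(s,t) := λ_s λ_t − (λ_{(s+t)/2})². -/

import Mathlib

open MeasureTheory

/-- The moment difference `λ_s(X)` of a positive random variable `X`. -/
noncomputable def momentLambda {Ω : Type*} [MeasurableSpace Ω] (μ : Measure Ω) (X : Ω → ℝ)
    (s : ℝ) : ℝ :=
  if s = 0 then Real.log (∫ ω, X ω ∂μ) - ∫ ω, Real.log (X ω) ∂μ
  else if s = 1 then (∫ ω, X ω * Real.log (X ω) ∂μ) - (∫ ω, X ω ∂μ) * Real.log (∫ ω, X ω ∂μ)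
  else ((∫ ω, X ω ^ s ∂μ) - (∫ ω, X ω ∂μ) ^ s) / (s * (s - 1))

/-- `ξ(s,t) := λ_s λ_t - (λ_{(s+t)/2})²`. -/
noncomputable def momentXi {Ω : Type*} [MeasurableSpace Ω] (μ : Measure Ω) (X : Ω → ℝ)
    (s t : ℝ) : ℝ :=
  momentLambda μ X s * momentLambda μ X t - (momentLambda μ X ((s + t) / 2)) ^ 2

/- ### Auxiliary algebra : 2×2 and Schur-complement positivity -/

lemma quad2 {A B P : ℝ} (h : ∀ a b : ℝ, 0 ≤ a ^ 2 * A + 2 * a * b * P + b ^ 2 * B) :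
    P ^ 2 ≤ A * B := by
  by_contra h'
  push_neg at h'
  have hA : 0 ≤ A := by have := h 1 0; nlinarith
  have hB : 0 ≤ B := by have := h 0 1; nlinarith
  have f3 : 0 ≤ A * (A * B - P ^ 2) := by have := h P (-A); nlinarith
  have f4 : 0 ≤ B * (A * B - P ^ 2) := by have := h B (-P); nlinarith
  have hA0 : A = 0 := by nlinarith
  have hB0 : B = 0 := by nlinarith
  have h5 := h (-P) 1
  nlinarith

lemma schur3 {A B C P Q R : ℝ}
    (h : ∀ a b c : ℝ, 0 ≤ a ^ 2 * A + b ^ 2 * B + c ^ 2 * C +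
      2 * a * b * P + 2 * a * c * Q + 2 * b * c * R) :
    (A * R - P * Q) ^ 2 ≤ (A * B - P ^ 2) * (A * C - Q ^ 2) := by
  have hA : 0 ≤ A := by have := h 1 0 0; nlinarith
  rcases eq_or_lt_of_le hA with hA0 | hA0
  · -- A = 0 : both sides are equal
    rw [← hA0]
    exact le_of_eq (by ring)
  · apply quad2
    intro b c
    have h2 := h (-(P * b + Q * c) / A) b c
    have key : A * ((-(P * b + Q * c) / A) ^ 2 * A + b ^ 2 * B + c ^ 2 * C +
        2 * (-(P * b + Q * c) / A) * b * P + 2 * (-(P * b + Q * c) / A) * c * Q +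
        2 * b * c * R) =
        b ^ 2 * (A * B - P ^ 2) + 2 * b * c * (A * R - P * Q) + c ^ 2 * (A * C - Q ^ 2) := by
      field_simp
      ring
    have h3 := mul_nonneg hA0.le h2
    rw [key] at h3
    linarith

/- ### The kernel function and its closed forms -/

/-- `Gfun m s x = ∫_m^x (x-c) c^{s-2} dc`. -/
noncomputable def Gfun (m s x : ℝ) : ℝ :=
  ∫ c in m..x, (x - c) * c ^ (s - 2)

lemma pos_of_mem_uIcc {m x c : ℝ} (hm : 0 < m) (hx : 0 < x) (hc : c ∈ Set.uIcc m x) :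
    0 < c := by
  rw [Set.mem_uIcc] at hc
  rcases hc with ⟨h1, _⟩ | ⟨h1, _⟩ <;> linarith

lemma zero_not_mem_uIcc {m x : ℝ} (hm : 0 < m) (hx : 0 < x) : (0 : ℝ) ∉ Set.uIcc m x :=
  fun h => lt_irrefl 0 (pos_of_mem_uIcc hm hx h)

lemma intInt_rpow {m x : ℝ} (hm : 0 < m) (hx : 0 < x) (r : ℝ) :
    IntervalIntegrable (fun c : ℝ => c ^ r) MeasureTheory.volume m x :=
  intervalIntegral.intervalIntegrable_rpow (Or.inr (zero_not_mem_uIcc hm hx))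

lemma intInt_inv {m x : ℝ} (hm : 0 < m) (hx : 0 < x) :
    IntervalIntegrable (fun c : ℝ => c⁻¹) MeasureTheory.volume m x := by
  apply ContinuousOn.intervalIntegrable
  exact continuousOn_inv₀.mono (fun c hc => (pos_of_mem_uIcc hm hx hc).ne')

lemma intInt_kernel {m x : ℝ} (hm : 0 < m) (hx : 0 < x) (r : ℝ) :
    IntervalIntegrable (fun c : ℝ => (x - c) * c ^ r) MeasureTheory.volume m x := by
  apply ContinuousOn.intervalIntegrable
  apply ContinuousOn.mul
  · exact (continuous_const.sub continuous_id).continuousOn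
  · intro c hc
    exact (Real.continuousAt_rpow_const c r
      (Or.inl (pos_of_mem_uIcc hm hx hc).ne')).continuousWithinAt

lemma Gfun_eq {m x : ℝ} (hm : 0 < m) (hx : 0 < x) {s : ℝ} (hs0 : s ≠ 0) (hs1 : s ≠ 1) :
    Gfun m s x = (x ^ s - m ^ s - s * m ^ (s - 1) * (x - m)) / (s * (s - 1)) := by
  have h0 : (0 : ℝ) ∉ Set.uIcc m x := zero_not_mem_uIcc hm hx
  have key : Gfun m s x =
      x * (∫ c in m..x, c ^ (s - 2)) - ∫ c in m..x, c ^ (s - 1) := by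
    rw [Gfun, ← intervalIntegral.integral_const_mul,
      ← intervalIntegral.integral_sub ((intInt_rpow hm hx (s - 2)).const_mul x)
        (intInt_rpow hm hx (s - 1))]
    apply intervalIntegral.integral_congr
    intro c hc
    have hc0 : (0 : ℝ) < c := pos_of_mem_uIcc hm hx hc
    simp only
    rw [show s - 1 = s - 2 + 1 by ring, Real.rpow_add_one hc0.ne']
    ring
  rw [key, integral_rpow (Or.inr ⟨fun h => hs1 (by linarith), h0⟩),
    integral_rpow (Or.inr ⟨fun h => hs0 (by linarith), h0⟩)]
  rw [show s - 2 + 1 = s - 1 by ring, show s - 1 + 1 = s by ring]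
  have hxx : x ^ s = x ^ (s - 1) * x := by
    have := Real.rpow_add_one hx.ne' (s - 1)
    rwa [show s - 1 + 1 = s by ring] at this
  have hmm : m ^ s = m ^ (s - 1) * m := by
    have := Real.rpow_add_one hm.ne' (s - 1)
    rwa [show s - 1 + 1 = s by ring] at this
  have hs1' : s - 1 ≠ 0 := sub_ne_zero.mpr hs1
  rw [hxx, hmm]
  field_simp
  ring

lemma Gfun_zero {m x : ℝ} (hm : 0 < m) (hx : 0 < x) :
    Gfun m 0 x = x / m - 1 - Real.log x + Real.log m := by
  have h0 : (0 : ℝ) ∉ Set.uIcc m x := zero_not_mem_uIcc hm hx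
  have key : Gfun m 0 x = x * (∫ c in m..x, c ^ (-2 : ℝ)) - ∫ c in m..x, c⁻¹ := by
    rw [Gfun, ← intervalIntegral.integral_const_mul,
      ← intervalIntegral.integral_sub ((intInt_rpow hm hx (-2)).const_mul x)
        (intInt_inv hm hx)]
    apply intervalIntegral.integral_congr
    intro c hc
    have hc0 : (0 : ℝ) < c := pos_of_mem_uIcc hm hx hc
    simp only
    have h2 : c ^ (-1 : ℝ) = c ^ (-2 : ℝ) * c := by
      rw [show (-1 : ℝ) = -2 + 1 by norm_num, Real.rpow_add_one hc0.ne']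
    rw [show (0 : ℝ) - 2 = (-2 : ℝ) by norm_num, ← Real.rpow_neg_one c, h2]
    ring
  rw [key, integral_rpow (Or.inr ⟨by norm_num, h0⟩), integral_inv h0]
  rw [show (-2 : ℝ) + 1 = -1 by norm_num, Real.rpow_neg_one, Real.rpow_neg_one,
    Real.log_div hx.ne' hm.ne']
  field_simp
  ring

lemma Gfun_one {m x : ℝ} (hm : 0 < m) (hx : 0 < x) :
    Gfun m 1 x = x * Real.log x - x - x * Real.log m + m := by
  have h0 : (0 : ℝ) ∉ Set.uIcc m x := zero_not_mem_uIcc hm hx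
  have key : Gfun m 1 x = x * (∫ c in m..x, c⁻¹) - ∫ _ in m..x, (1 : ℝ) := by
    rw [Gfun, ← intervalIntegral.integral_const_mul,
      ← intervalIntegral.integral_sub ((intInt_inv hm hx).const_mul x)
        intervalIntegrable_const]
    apply intervalIntegral.integral_congr
    intro c hc
    have hc0 : (0 : ℝ) < c := pos_of_mem_uIcc hm hx hc
    simp only
    rw [show (1 : ℝ) - 2 = (-1 : ℝ) by norm_num, Real.rpow_neg_one]
    field_simp
  rw [key, integral_inv h0, intervalIntegral.integral_const,
    Real.log_div hx.ne' hm.ne']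
  simp only [smul_eq_mul, mul_one]
  ring

/- ### Pointwise positivity of the quadratic kernel combination -/

lemma Gquad {m x : ℝ} (hm : 0 < m) (hx : 0 < x) (s t u a b c : ℝ) :
    0 ≤ a ^ 2 * Gfun m s x + b ^ 2 * Gfun m t x + c ^ 2 * Gfun m u x +
      2 * a * b * Gfun m ((s + t) / 2) x + 2 * a * c * Gfun m ((s + u) / 2) x +
      2 * b * c * Gfun m ((t + u) / 2) x := by
  have hI : ∀ r : ℝ, IntervalIntegrable (fun c' : ℝ => (x - c') * c' ^ (r - 2))
      MeasureTheory.volume m x := fun r => intInt_kernel hm hx (r - 2)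
  have key : a ^ 2 * Gfun m s x + b ^ 2 * Gfun m t x + c ^ 2 * Gfun m u x +
      2 * a * b * Gfun m ((s + t) / 2) x + 2 * a * c * Gfun m ((s + u) / 2) x +
      2 * b * c * Gfun m ((t + u) / 2) x =
      ∫ c' in m..x, (x - c') *
        (a * c' ^ (s / 2 - 1) + b * c' ^ (t / 2 - 1) + c * c' ^ (u / 2 - 1)) ^ 2 := by
    simp only [Gfun]
    rw [← intervalIntegral.integral_const_mul (a ^ 2),
      ← intervalIntegral.integral_const_mul (b ^ 2),
      ← intervalIntegral.integral_const_mul (c ^ 2),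
      ← intervalIntegral.integral_const_mul (2 * a * b),
      ← intervalIntegral.integral_const_mul (2 * a * c),
      ← intervalIntegral.integral_const_mul (2 * b * c),
      ← intervalIntegral.integral_add ((hI s).const_mul _) ((hI t).const_mul _),
      ← intervalIntegral.integral_add (((hI s).const_mul _).add ((hI t).const_mul _))
        ((hI u).const_mul _),
      ← intervalIntegral.integral_add
        ((((hI s).const_mul _).add ((hI t).const_mul _)).add ((hI u).const_mul _))
        ((hI ((s + t) / 2)).const_mul _),
      ← intervalIntegral.integral_add
        (((((hI s).const_mul _).add ((hI t).const_mul _)).add ((hI u).const_mul _)).add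
          ((hI ((s + t) / 2)).const_mul _)) ((hI ((s + u) / 2)).const_mul _),
      ← intervalIntegral.integral_add
        ((((((hI s).const_mul _).add ((hI t).const_mul _)).add ((hI u).const_mul _)).add
          ((hI ((s + t) / 2)).const_mul _)).add ((hI ((s + u) / 2)).const_mul _))
        ((hI ((t + u) / 2)).const_mul _)]
    apply intervalIntegral.integral_congr
    intro c' hc'
    have h0 : (0 : ℝ) < c' := pos_of_mem_uIcc hm hx hc'
    simp only
    have e1 : ∀ p : ℝ, c' ^ (p - 2) = c' ^ (p / 2 - 1) * c' ^ (p / 2 - 1) := by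
      intro p
      rw [← Real.rpow_add h0]
      congr 1; ring
    have e2 : ∀ p q : ℝ, c' ^ (p / 2 - 1) * c' ^ (q / 2 - 1) = c' ^ ((p + q) / 2 - 2) := by
      intro p q
      rw [← Real.rpow_add h0]
      congr 1; ring
    rw [e1 s, e1 t, e1 u, ← e2 s t, ← e2 s u, ← e2 t u]
    ring
  rw [key]
  rcases le_total m x with h | h
  · apply intervalIntegral.integral_nonneg h
    intro c' hc'
    exact mul_nonneg (by linarith [hc'.2]) (sq_nonneg _)
  · have hflip : (∫ c' in m..x, (x - c') *
        (a * c' ^ (s / 2 - 1) + b * c' ^ (t / 2 - 1) + c * c' ^ (u / 2 - 1)) ^ 2) =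
        ∫ c' in x..m, (c' - x) *
        (a * c' ^ (s / 2 - 1) + b * c' ^ (t / 2 - 1) + c * c' ^ (u / 2 - 1)) ^ 2 := by
      rw [intervalIntegral.integral_symm x m, ← intervalIntegral.integral_neg]
      apply intervalIntegral.integral_congr
      intro c' _
      ring
    rw [hflip]
    apply intervalIntegral.integral_nonneg h
    intro c' hc'
    exact mul_nonneg (by linarith [hc'.1]) (sq_nonneg _)

theorem lemma2 {Ω : Type*} [MeasurableSpace Ω] (μ : Measure Ω) [IsProbabilityMeasure μ]
    (X : Ω → ℝ) (hX : Measurable X) (hpos : ∀ᵐ ω ∂μ, 0 < X ω)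
    (hmom : ∀ s : ℝ, Integrable (fun ω => X ω ^ s) μ)
    (hlog : Integrable (fun ω => Real.log (X ω)) μ)
    (hxlog : Integrable (fun ω => X ω * Real.log (X ω)) μ)
    (s t u : ℝ) :
    momentXi μ X s t * momentXi μ X s u -
      (momentXi μ X s ((t + u) / 2) -
        momentXi μ X ((s + u) / 2) ((s + t) / 2)) ^ 2 ≥ 0 := by
  have hXint : Integrable X μ := by
    have := hmom 1
    simpa [Real.rpow_one] using this
  set m : ℝ := ∫ ω, X ω ∂μ with hm_def
  have hm : 0 < m := by
    rw [hm_def]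
    apply (integral_pos_iff_support_of_nonneg_ae (hpos.mono fun ω h => h.le) hXint).mpr
    by_contra hc
    push_neg at hc
    have hc0 : μ (Function.support X) = 0 := le_antisymm hc (zero_le)
    have hsupp : μ (Function.support X)ᶜ = 0 := by
      have h1 : ∀ᵐ ω ∂μ, ω ∈ Function.support X := hpos.mono fun ω h => ne_of_gt h
      exact MeasureTheory.ae_iff.mp h1
    have huniv := measure_union_le (μ := μ) (Function.support X) (Function.support X)ᶜ
    rw [Set.union_compl_self, measure_univ, hc0, hsupp] at huniv
    simp at huniv
  -- integral representation of momentLambda via Gfun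
  have repr : ∀ r : ℝ, Integrable (fun ω => Gfun m r (X ω)) μ ∧
      momentLambda μ X r = ∫ ω, Gfun m r (X ω) ∂μ := by
    intro r
    rcases eq_or_ne r 0 with rfl | hr0
    · have hae : (fun ω => Gfun m 0 (X ω)) =ᵐ[μ]
          (fun ω => X ω / m - 1 - Real.log (X ω) + Real.log m) :=
        hpos.mono fun ω hω => Gfun_zero hm hω
      have hI1 : Integrable (fun ω => X ω / m) μ := by exact hXint.div_const m
      have hI2 : Integrable (fun ω => X ω / m - 1) μ := by exact hI1.sub (integrable_const 1)
      have hI3 : Integrable (fun ω => X ω / m - 1 - Real.log (X ω)) μ := by exact hI2.sub hlog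
      have hfi : Integrable (fun ω => X ω / m - 1 - Real.log (X ω) + Real.log m) μ := by
        exact hI3.add (integrable_const _)
      refine ⟨hfi.congr hae.symm, ?_⟩
      rw [integral_congr_ae hae, integral_add hI3 (integrable_const _),
        integral_sub hI2 hlog, integral_sub hI1 (integrable_const 1), integral_div]
      simp only [momentLambda, if_pos rfl, integral_const, measure_univ, probReal_univ, ENNReal.toReal_one,
        one_smul, ← hm_def]
      rw [div_self hm.ne']
      norm_num
      ring
    rcases eq_or_ne r 1 with rfl | hr1
    · have hae : (fun ω => Gfun m 1 (X ω)) =ᵐ[μ]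
          (fun ω => X ω * Real.log (X ω) - X ω - X ω * Real.log m + m) :=
        hpos.mono fun ω hω => Gfun_one hm hω
      have hI1 : Integrable (fun ω => X ω * Real.log (X ω) - X ω) μ := by
        exact hxlog.sub hXint
      have hI2 : Integrable (fun ω => X ω * Real.log (X ω) - X ω - X ω * Real.log m) μ := by
        exact hI1.sub (hXint.mul_const _)
      have hfi : Integrable
          (fun ω => X ω * Real.log (X ω) - X ω - X ω * Real.log m + m) μ := by
        exact hI2.add (integrable_const _)
      refine ⟨hfi.congr hae.symm, ?_⟩
      rw [integral_congr_ae hae, integral_add hI2 (integrable_const _),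
        integral_sub hI1 (hXint.mul_const _), integral_sub hxlog hXint, integral_mul_const]
      simp only [momentLambda, if_neg one_ne_zero, if_pos rfl, integral_const, measure_univ,
        probReal_univ, ENNReal.toReal_one, one_smul, ← hm_def]
      norm_num
      ring
    · have hae : (fun ω => Gfun m r (X ω)) =ᵐ[μ]
          (fun ω => (X ω ^ r - m ^ r - r * m ^ (r - 1) * (X ω - m)) / (r * (r - 1))) :=
        hpos.mono fun ω hω => Gfun_eq hm hω hr0 hr1
      have hI0 : Integrable (fun ω => X ω - m) μ := by exact hXint.sub (integrable_const m)
      have hI1 : Integrable (fun ω => r * m ^ (r - 1) * (X ω - m)) μ := by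
        exact hI0.const_mul _
      have hI2 : Integrable (fun ω => X ω ^ r - m ^ r) μ := by
        exact (hmom r).sub (integrable_const _)
      have hI3 : Integrable (fun ω => X ω ^ r - m ^ r - r * m ^ (r - 1) * (X ω - m)) μ := by
        exact hI2.sub hI1
      have hfi : Integrable
          (fun ω => (X ω ^ r - m ^ r - r * m ^ (r - 1) * (X ω - m)) / (r * (r - 1))) μ := by
        exact hI3.div_const _
      refine ⟨hfi.congr hae.symm, ?_⟩
      rw [integral_congr_ae hae, integral_div, integral_sub hI2 hI1,
        integral_sub (hmom r) (integrable_const _), integral_const_mul,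
        integral_sub hXint (integrable_const m)]
      simp only [momentLambda, if_neg hr0, if_neg hr1, integral_const, measure_univ,
        probReal_univ, ENNReal.toReal_one, one_smul, ← hm_def]
      ring
  -- positivity of the quadratic form
  have hform : ∀ a b c : ℝ,
      0 ≤ a ^ 2 * momentLambda μ X s + b ^ 2 * momentLambda μ X t +
        c ^ 2 * momentLambda μ X u + 2 * a * b * momentLambda μ X ((s + t) / 2) +
        2 * a * c * momentLambda μ X ((s + u) / 2) +
        2 * b * c * momentLambda μ X ((t + u) / 2) := by
    intro a b c
    obtain ⟨i1, e1⟩ := repr s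
    obtain ⟨i2, e2⟩ := repr t
    obtain ⟨i3, e3⟩ := repr u
    obtain ⟨i4, e4⟩ := repr ((s + t) / 2)
    obtain ⟨i5, e5⟩ := repr ((s + u) / 2)
    obtain ⟨i6, e6⟩ := repr ((t + u) / 2)
    have j1 : Integrable (fun ω => a ^ 2 * Gfun m s (X ω)) μ := by exact i1.const_mul _
    have j2 : Integrable (fun ω => b ^ 2 * Gfun m t (X ω)) μ := by exact i2.const_mul _
    have j3 : Integrable (fun ω => c ^ 2 * Gfun m u (X ω)) μ := by exact i3.const_mul _
    have j4 : Integrable (fun ω => 2 * a * b * Gfun m ((s + t) / 2) (X ω)) μ := by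
      exact i4.const_mul _
    have j5 : Integrable (fun ω => 2 * a * c * Gfun m ((s + u) / 2) (X ω)) μ := by
      exact i5.const_mul _
    have j6 : Integrable (fun ω => 2 * b * c * Gfun m ((t + u) / 2) (X ω)) μ := by
      exact i6.const_mul _
    have j12 : Integrable (fun ω => a ^ 2 * Gfun m s (X ω) + b ^ 2 * Gfun m t (X ω)) μ := by
      exact j1.add j2
    have j13 : Integrable (fun ω => a ^ 2 * Gfun m s (X ω) + b ^ 2 * Gfun m t (X ω) +
        c ^ 2 * Gfun m u (X ω)) μ := by exact j12.add j3
    have j14 : Integrable (fun ω => a ^ 2 * Gfun m s (X ω) + b ^ 2 * Gfun m t (X ω) +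
        c ^ 2 * Gfun m u (X ω) + 2 * a * b * Gfun m ((s + t) / 2) (X ω)) μ := by
      exact j13.add j4
    have j15 : Integrable (fun ω => a ^ 2 * Gfun m s (X ω) + b ^ 2 * Gfun m t (X ω) +
        c ^ 2 * Gfun m u (X ω) + 2 * a * b * Gfun m ((s + t) / 2) (X ω) +
        2 * a * c * Gfun m ((s + u) / 2) (X ω)) μ := by exact j14.add j5
    rw [e1, e2, e3, e4, e5, e6, ← integral_const_mul (a ^ 2), ← integral_const_mul (b ^ 2),
      ← integral_const_mul (c ^ 2), ← integral_const_mul (2 * a * b),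
      ← integral_const_mul (2 * a * c), ← integral_const_mul (2 * b * c),
      ← integral_add j1 j2, ← integral_add j12 j3, ← integral_add j13 j4,
      ← integral_add j14 j5, ← integral_add j15 j6]
    apply integral_nonneg_of_ae
    exact hpos.mono fun ω hω => Gquad hm hω s t u a b c
  have hkey := schur3 hform
  have harg : ((s + u) / 2 + (s + t) / 2) / 2 = (s + (t + u) / 2) / 2 := by ring
  have hdiff : momentXi μ X s ((t + u) / 2) - momentXi μ X ((s + u) / 2) ((s + t) / 2) =
      momentLambda μ X s * momentLambda μ X ((t + u) / 2) -
      momentLambda μ X ((s + u) / 2) * momentLambda μ X ((s + t) / 2) := by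
    simp only [momentXi]
    rw [harg]
    ring
  rw [hdiff]
  simp only [momentXi]
  nlinarith [hkey]
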